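/- arXiv:2410.05655 — 2 statements merged into one kernel-verified Lean document; each statement's English description precedes it below -/
import Mathlib

section
/- For every behavior policy μ ∈ Λ and every state s, the conditional variance of the PDIS return satisfies the backward recursion: for t = T−1, Var(G^PDIS(τ^{μ_{t:T−1}}_{t:T−1}) | S_t = s) = Σ_{a} μ_t(a|s)·ρ_t(a|s)²·q_{π,t}(s,a)² − v_{π,t}(s)², where ρ_t(a|s) = π_t(a|s)/μ_t(a|s) and the sum is over {a : μ_t(a|s) > 0}; and for t ∈ {0,…,T−2}, Var(G^PDIS(τ^{μ_{t:T−1}}_{t:T−1}) | S_t = s) = Σ_{a} μ_t(a|s)·ρ_t(a|s)²·( Σ_{s'} p(s'|s,a)·Var(G^PDIS(τ^{μ_{t+1:T−1}}_{t+1:T−1}) | S_{t+1} = s') + ν_{π,t}(s,a) + q_{π,t}(s,a)² ) − v_{π,t}(s)². -/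
open Finset

section MDPDefs

variable {S A : Type} [Fintype S] [Fintype A]

/-- State value `v_{π,t}(s)` of policy `π` for reward `r`, with `n` remaining steps at
time `t`; the paper's `v_{π,t}(s)` (horizon `T`) is `vval p r π (T − t) t s`. -/
noncomputable def vval (p : S → A → S → ℝ) (r : S → A → ℝ) (π : ℕ → S → A → ℝ) :
    ℕ → ℕ → S → ℝ
  | 0, _, _ => 0
  | n + 1, t, s => ∑ a, π t s a * (r s a + ∑ s', p s a s' * vval p r π n (t + 1) s')

/-- Action value `q_{π,t}(s,a) = r(s,a) + ∑_{s'} p(s'|s,a) v_{π,t+1}(s')`, where `n`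
steps remain after the current one; the paper's `q_{π,t}` is `qval p r π (T − t − 1) t`. -/
noncomputable def qval (p : S → A → S → ℝ) (r : S → A → ℝ) (π : ℕ → S → A → ℝ)
    (n t : ℕ) (s : S) (a : A) : ℝ :=
  r s a + ∑ s', p s a s' * vval p r π n (t + 1) s'

/-- `ν_{π,t}(s,a) = Var_{s' ∼ p(·|s,a)}(v_{π,t+1}(s'))`, with `n = T − t − 1`
remaining steps after the current one (in particular `ν_{π,T−1} ≡ 0` since `v_{π,T} ≡ 0`). -/
noncomputable def nuVar (p : S → A → S → ℝ) (r : S → A → ℝ) (π : ℕ → S → A → ℝ)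
    (n t : ℕ) (s : S) (a : A) : ℝ :=
  (∑ s', p s a s' * (vval p r π n (t + 1) s') ^ 2)
    - (∑ s', p s a s' * vval p r π n (t + 1) s') ^ 2

/-- Probability, under behavior policy `μ`, of the trajectory
`τ = (A_t, S_{t+1}, A_{t+1}, …, S_{t+n})` of `n` steps starting from state `s` at
time `t`: actions `A_k ∼ μ_k(·|S_k)` and states `S_{k+1} ∼ p(·|S_k, A_k)`. -/
noncomputable def trajProb (p : S → A → S → ℝ) (μ : ℕ → S → A → ℝ) :
    (n : ℕ) → ℕ → S → (Fin n → A × S) → ℝ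
  | 0, _, _, _ => 1
  | n + 1, t, s, τ =>
      μ t s (τ 0).1 * p s (τ 0).1 (τ 0).2 *
        trajProb p μ n (t + 1) (τ 0).2 (fun i => τ i.succ)

/-- PDIS return `G^PDIS(τ^{μ_{t:t+n−1}}_{t:t+n−1}) = ∑_{k=t}^{t+n−1} (∏_{j=t}^{k} ρ_j) R_{k+1}`
(in its equivalent recursive form) along trajectory `τ` from state `s` at time `t`,
where `ρ_j = π_j(A_j|S_j)/μ_j(A_j|S_j)` and `R_{k+1} = r(S_k, A_k)`. -/
noncomputable def pdis (r : S → A → ℝ) (π μ : ℕ → S → A → ℝ) :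
    (n : ℕ) → ℕ → S → (Fin n → A × S) → ℝ
  | 0, _, _, _ => 0
  | n + 1, t, s, τ =>
      π t s (τ 0).1 / μ t s (τ 0).1 *
        (r s (τ 0).1 + pdis r π μ n (t + 1) (τ 0).2 (fun i => τ i.succ))

/-- Conditional expectation `E[f(τ) | S_t = s]` over `n`-step trajectories generated
by the behavior policy `μ` from state `s` at time `t`. -/
noncomputable def expTraj (p : S → A → S → ℝ) (μ : ℕ → S → A → ℝ) (n t : ℕ) (s : S)
    (f : (Fin n → A × S) → ℝ) : ℝ :=
  ∑ τ : Fin n → A × S, trajProb p μ n t s τ * f τ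

/-- Conditional variance `Var(G^PDIS(τ^{μ_{t:T−1}}_{t:T−1}) | S_t = s)` with
`n = T − t` remaining steps. -/
noncomputable def pdisVar (p : S → A → S → ℝ) (r : S → A → ℝ) (π μ : ℕ → S → A → ℝ)
    (n t : ℕ) (s : S) : ℝ :=
  expTraj p μ n t s (fun τ => (pdis r π μ n t s τ) ^ 2)
    - (expTraj p μ n t s (pdis r π μ n t s)) ^ 2

/-- Conditional variance `Var(G^PDIS(τ^{μ_{t+1:T−1}}_{t+1:T−1}) | S_t = s, A_t = a)`,
where `S_{t+1} ∼ p(·|s,a)` and then the trajectory is generated by `μ` from `S_{t+1}`;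
here `n = T − t − 1`. -/
noncomputable def pdisVarSA (p : S → A → S → ℝ) (r : S → A → ℝ) (π μ : ℕ → S → A → ℝ)
    (n t : ℕ) (s : S) (a : A) : ℝ :=
  (∑ s', p s a s' * expTraj p μ n (t + 1) s' (fun τ => (pdis r π μ n (t + 1) s' τ) ^ 2))
    - (∑ s', p s a s' * expTraj p μ n (t + 1) s' (pdis r π μ n (t + 1) s')) ^ 2

/-- Extended reward `r̃_t(s,a)` (horizon `T`) computed with continuation behavior
policy `μ`: `r̃_{T−1}(s,a) = r(s,a)²`, and for `t ≤ T−2`,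
`r̃_t(s,a) = ν_{π,t}(s,a) + q_{π,t}(s,a)² + ∑_{s'} p(s'|s,a) Var(G^PDIS(τ^{μ_{t+1:T−1}}) | S_{t+1} = s')`. -/
noncomputable def rtilde (p : S → A → S → ℝ) (r : S → A → ℝ) (π μ : ℕ → S → A → ℝ)
    (T t : ℕ) (s : S) (a : A) : ℝ :=
  if t + 1 = T then (r s a) ^ 2
  else
    nuVar p r π (T - t - 1) t s a + (qval p r π (T - t - 1) t s a) ^ 2
      + ∑ s', p s a s' * pdisVar p r π μ (T - t - 1) (t + 1) s'

/-- Total (unconditional) variance `Var(G^PDIS(τ^{μ_{0:T−1}}_{0:T−1}))` of the PDIS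
estimator, including the randomness of the initial state `S_0 ∼ p0`. -/
noncomputable def pdisTotalVar (p : S → A → S → ℝ) (r : S → A → ℝ) (π μ : ℕ → S → A → ℝ)
    (p0 : S → ℝ) (T : ℕ) : ℝ :=
  (∑ s, p0 s * expTraj p μ T 0 s (fun τ => (pdis r π μ T 0 s τ) ^ 2))
    - (∑ s, p0 s * expTraj p μ T 0 s (pdis r π μ T 0 s)) ^ 2

/-- Feasible set of the step-wise constrained problem at time `t` and state `s`:
probability distributions `ν` on `A` satisfying the coverage condition
`ν a = 0 → π_t(a|s) q_{π,t}(s,a) = 0` and the safety constraint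
`∑ a, ν a * q^c_{μ*,t}(s,a) ≤ (1 + ε) v^c_{π,t}(s)`. -/
noncomputable def stepFeasible (p : S → A → S → ℝ) (r c : S → A → ℝ)
    (π μstar : ℕ → S → A → ℝ) (T : ℕ) (ε : ℝ) (t : ℕ) (s : S) : Set (A → ℝ) :=
  {ν | (∀ a, 0 ≤ ν a) ∧ (∑ a, ν a) = 1 ∧
    (∀ a, ν a = 0 → π t s a * qval p r π (T - t - 1) t s a = 0) ∧
    (∑ a, ν a * qval p c μstar (T - t - 1) t s a) ≤ (1 + ε) * vval p c π (T - t) t s}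

/-- Objective `∑_{a : ν a > 0} π_t(a|s)² r̃_t(s,a) / ν a` of the step-wise constrained
problem at time `t` and state `s`, where `r̃_t` is computed with continuation policy
`μ*_{t+1:T−1}`. -/
noncomputable def stepObj (p : S → A → S → ℝ) (r : S → A → ℝ) (π μstar : ℕ → S → A → ℝ)
    (T t : ℕ) (s : S) (ν : A → ℝ) : ℝ :=
  ∑ a ∈ Finset.univ.filter (fun a => 0 < ν a),
    (π t s a) ^ 2 * rtilde p r π μstar T t s a / ν a

end MDPDefs

section AuxLemmas

variable {S A : Type} [Fintype S] [Fintype A]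

lemma sum_pi_succ (n : ℕ) (f : (Fin (n + 1) → A × S) → ℝ) :
    ∑ τ : Fin (n + 1) → A × S, f τ
      = ∑ x : A × S, ∑ τ : Fin n → A × S, f (Fin.cons x τ) := by
  rw [← Equiv.sum_comp (Fin.consEquiv (fun _ : Fin (n + 1) => A × S)) f,
    Fintype.sum_prod_type]
  rfl

lemma trajProb_cons (p : S → A → S → ℝ) (μ : ℕ → S → A → ℝ) (n t : ℕ) (s : S)
    (x : A × S) (τ : Fin n → A × S) :
    trajProb p μ (n + 1) t s (Fin.cons x τ)
      = μ t s x.1 * p s x.1 x.2 * trajProb p μ n (t + 1) x.2 τ := by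
  simp [trajProb]

lemma pdis_cons (r : S → A → ℝ) (π μ : ℕ → S → A → ℝ) (n t : ℕ) (s : S)
    (x : A × S) (τ : Fin n → A × S) :
    pdis r π μ (n + 1) t s (Fin.cons x τ)
      = π t s x.1 / μ t s x.1 * (r s x.1 + pdis r π μ n (t + 1) x.2 τ) := by
  simp [pdis]

lemma trajProb_sum (p : S → A → S → ℝ) (μ : ℕ → S → A → ℝ)
    (hp : ∀ s a, (∀ s', 0 ≤ p s a s') ∧ (∑ s', p s a s') = 1)
    (hμ : ∀ t s, (∀ a, 0 ≤ μ t s a) ∧ (∑ a, μ t s a) = 1) :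
    ∀ n t (s : S), ∑ τ : Fin n → A × S, trajProb p μ n t s τ = 1 := by
  intro n
  induction n with
  | zero => intro t s; simp [trajProb]
  | succ n ih =>
    intro t s
    rw [sum_pi_succ, Fintype.sum_prod_type]
    simp only [trajProb_cons, ← Finset.mul_sum, ih, mul_one]
    simp only [← Finset.mul_sum, (fun a => (hp s a).2), mul_one, (hμ t s).2]

lemma expTraj_pdis_eq_vval (p : S → A → S → ℝ) (r : S → A → ℝ) (π μ : ℕ → S → A → ℝ)
    (hp : ∀ s a, (∀ s', 0 ≤ p s a s') ∧ (∑ s', p s a s') = 1)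
    (hμ : ∀ t s, (∀ a, 0 ≤ μ t s a) ∧ (∑ a, μ t s a) = 1) :
    ∀ n t, (∀ k, t ≤ k → k < t + n → ∀ (s : S) (a : A), μ k s a = 0 →
        π k s a * qval p r π (t + n - k - 1) k s a = 0) →
      ∀ s : S, expTraj p μ n t s (pdis r π μ n t s) = vval p r π n t s := by
  intro n
  induction n with
  | zero => intro t _ s; simp [expTraj, pdis, vval]
  | succ n ih =>
    intro t hcov s
    have hcov' : ∀ k, t + 1 ≤ k → k < (t + 1) + n → ∀ (s : S) (a : A), μ k s a = 0 →
        π k s a * qval p r π ((t + 1) + n - k - 1) k s a = 0 := by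
      intro k hk1 hk2 s' a h
      have heq : (t + 1) + n - k - 1 = t + (n + 1) - k - 1 := by omega
      rw [heq]; exact hcov k (by omega) (by omega) s' a h
    have ihE : ∀ s' : S, ∑ τ : Fin n → A × S,
        trajProb p μ n (t + 1) s' τ * pdis r π μ n (t + 1) s' τ
          = vval p r π n (t + 1) s' := fun s' => ih (t + 1) hcov' s'
    have hmass : ∀ s' : S, ∑ τ : Fin n → A × S, trajProb p μ n (t + 1) s' τ = 1 :=
      trajProb_sum p μ hp hμ n (t + 1)
    unfold expTraj
    rw [sum_pi_succ, Fintype.sum_prod_type]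
    show _ = vval p r π (n + 1) t s
    rw [vval]
    apply Finset.sum_congr rfl
    intro a _
    simp only [trajProb_cons, pdis_cons]
    have key : ∀ s' : S, ∑ τ : Fin n → A × S,
        μ t s a * p s a s' * trajProb p μ n (t + 1) s' τ
          * (π t s a / μ t s a * (r s a + pdis r π μ n (t + 1) s' τ))
        = μ t s a * p s a s' * (π t s a / μ t s a)
            * (r s a + vval p r π n (t + 1) s') := by
      intro s'
      calc ∑ τ : Fin n → A × S, μ t s a * p s a s' * trajProb p μ n (t + 1) s' τ
            * (π t s a / μ t s a * (r s a + pdis r π μ n (t + 1) s' τ))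
          = ∑ τ : Fin n → A × S,
              ((μ t s a * p s a s' * (π t s a / μ t s a) * r s a)
                  * trajProb p μ n (t + 1) s' τ
                + (μ t s a * p s a s' * (π t s a / μ t s a))
                  * (trajProb p μ n (t + 1) s' τ * pdis r π μ n (t + 1) s' τ)) := by
            apply Finset.sum_congr rfl; intro τ _; ring
        _ = (μ t s a * p s a s' * (π t s a / μ t s a) * r s a)
              * (∑ τ : Fin n → A × S, trajProb p μ n (t + 1) s' τ)
            + (μ t s a * p s a s' * (π t s a / μ t s a))
              * (∑ τ : Fin n → A × S,
                  trajProb p μ n (t + 1) s' τ * pdis r π μ n (t + 1) s' τ) := by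
            rw [Finset.sum_add_distrib, ← Finset.mul_sum, ← Finset.mul_sum]
        _ = _ := by rw [hmass, ihE]; ring
    rw [Finset.sum_congr rfl (fun s' _ => key s')]
    have step : ∑ s' : S, μ t s a * p s a s' * (π t s a / μ t s a)
          * (r s a + vval p r π n (t + 1) s')
        = μ t s a * (π t s a / μ t s a)
          * (r s a + ∑ s' : S, p s a s' * vval p r π n (t + 1) s') := by
      calc ∑ s' : S, μ t s a * p s a s' * (π t s a / μ t s a)
            * (r s a + vval p r π n (t + 1) s')
          = ∑ s' : S, ((μ t s a * (π t s a / μ t s a) * r s a) * p s a s'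
              + (μ t s a * (π t s a / μ t s a))
                * (p s a s' * vval p r π n (t + 1) s')) := by
            apply Finset.sum_congr rfl; intro s' _; ring
        _ = (μ t s a * (π t s a / μ t s a) * r s a) * (∑ s' : S, p s a s')
            + (μ t s a * (π t s a / μ t s a))
              * (∑ s' : S, p s a s' * vval p r π n (t + 1) s') := by
            rw [Finset.sum_add_distrib, ← Finset.mul_sum, ← Finset.mul_sum]
        _ = _ := by rw [(hp s a).2]; ring
    rw [step]
    by_cases h : μ t s a = 0
    · have hq := hcov t (le_refl t) (by omega) s a h
      have hrem : t + (n + 1) - t - 1 = n := by omega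
      rw [hrem] at hq
      rw [h]
      simpa [qval] using hq.symm
    · rw [mul_comm (μ t s a) (π t s a / μ t s a), div_mul_cancel₀ (π t s a) h]


lemma pdisVar_zero (p : S → A → S → ℝ) (r : S → A → ℝ) (π μ : ℕ → S → A → ℝ)
    (t : ℕ) (s : S) : pdisVar p r π μ 0 t s = 0 := by
  simp [pdisVar, expTraj, pdis]

lemma nuVar_zero (p : S → A → S → ℝ) (r : S → A → ℝ) (π : ℕ → S → A → ℝ)
    (t : ℕ) (s : S) (a : A) : nuVar p r π 0 t s a = 0 := by
  simp [nuVar, vval]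

lemma expTraj_pdis_sq (p : S → A → S → ℝ) (r : S → A → ℝ) (π μ : ℕ → S → A → ℝ)
    (hp : ∀ s a, (∀ s', 0 ≤ p s a s') ∧ (∑ s', p s a s') = 1)
    (hμ : ∀ t s, (∀ a, 0 ≤ μ t s a) ∧ (∑ a, μ t s a) = 1)
    (n t : ℕ)
    (hcov : ∀ k, t + 1 ≤ k → k < (t + 1) + n → ∀ (s : S) (a : A), μ k s a = 0 →
        π k s a * qval p r π ((t + 1) + n - k - 1) k s a = 0) (s : S) :
    expTraj p μ (n + 1) t s (fun τ => (pdis r π μ (n + 1) t s τ) ^ 2)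
      = ∑ a : A, μ t s a * (π t s a / μ t s a) ^ 2 *
          ((∑ s', p s a s' * pdisVar p r π μ n (t + 1) s')
            + nuVar p r π n t s a + (qval p r π n t s a) ^ 2) := by
  have hv : ∀ s' : S, expTraj p μ n (t + 1) s' (pdis r π μ n (t + 1) s')
      = vval p r π n (t + 1) s' := expTraj_pdis_eq_vval p r π μ hp hμ n (t + 1) hcov
  have hmass : ∀ s' : S, ∑ τ : Fin n → A × S, trajProb p μ n (t + 1) s' τ = 1 :=
    trajProb_sum p μ hp hμ n (t + 1)
  unfold expTraj
  rw [sum_pi_succ, Fintype.sum_prod_type]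
  apply Finset.sum_congr rfl
  intro a _
  simp only [trajProb_cons, pdis_cons]
  have key : ∀ s' : S, ∑ τ : Fin n → A × S,
      μ t s a * p s a s' * trajProb p μ n (t + 1) s' τ
        * (π t s a / μ t s a * (r s a + pdis r π μ n (t + 1) s' τ)) ^ 2
      = μ t s a * p s a s' * (π t s a / μ t s a) ^ 2 *
          ((r s a) ^ 2 + 2 * r s a * vval p r π n (t + 1) s'
            + (pdisVar p r π μ n (t + 1) s' + (vval p r π n (t + 1) s') ^ 2)) := by
    intro s'
    have e1 := hmass s'
    have e2 : ∑ τ : Fin n → A × S,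
        trajProb p μ n (t + 1) s' τ * pdis r π μ n (t + 1) s' τ
          = vval p r π n (t + 1) s' := hv s'
    have e3 : ∑ τ : Fin n → A × S,
        trajProb p μ n (t + 1) s' τ * (pdis r π μ n (t + 1) s' τ) ^ 2
          = pdisVar p r π μ n (t + 1) s' + (vval p r π n (t + 1) s') ^ 2 := by
      have : pdisVar p r π μ n (t + 1) s'
          = expTraj p μ n (t + 1) s' (fun τ => (pdis r π μ n (t + 1) s' τ) ^ 2)
            - (expTraj p μ n (t + 1) s' (pdis r π μ n (t + 1) s')) ^ 2 := rfl
      rw [this, hv]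
      show _ = expTraj p μ n (t + 1) s' (fun τ => (pdis r π μ n (t + 1) s' τ) ^ 2)
          - (vval p r π n (t + 1) s') ^ 2 + (vval p r π n (t + 1) s') ^ 2
      unfold expTraj
      ring
    calc ∑ τ : Fin n → A × S, μ t s a * p s a s' * trajProb p μ n (t + 1) s' τ
          * (π t s a / μ t s a * (r s a + pdis r π μ n (t + 1) s' τ)) ^ 2
        = ∑ τ : Fin n → A × S,
            ((μ t s a * p s a s' * (π t s a / μ t s a) ^ 2 * (r s a) ^ 2)
                * trajProb p μ n (t + 1) s' τ
              + (μ t s a * p s a s' * (π t s a / μ t s a) ^ 2 * (2 * r s a))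
                * (trajProb p μ n (t + 1) s' τ * pdis r π μ n (t + 1) s' τ)
              + (μ t s a * p s a s' * (π t s a / μ t s a) ^ 2)
                * (trajProb p μ n (t + 1) s' τ * (pdis r π μ n (t + 1) s' τ) ^ 2)) := by
          apply Finset.sum_congr rfl; intro τ _; ring
      _ = (μ t s a * p s a s' * (π t s a / μ t s a) ^ 2 * (r s a) ^ 2)
            * (∑ τ : Fin n → A × S, trajProb p μ n (t + 1) s' τ)
          + (μ t s a * p s a s' * (π t s a / μ t s a) ^ 2 * (2 * r s a))
            * (∑ τ : Fin n → A × S,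
                trajProb p μ n (t + 1) s' τ * pdis r π μ n (t + 1) s' τ)
          + (μ t s a * p s a s' * (π t s a / μ t s a) ^ 2)
            * (∑ τ : Fin n → A × S,
                trajProb p μ n (t + 1) s' τ * (pdis r π μ n (t + 1) s' τ) ^ 2) := by
          rw [Finset.sum_add_distrib, Finset.sum_add_distrib, ← Finset.mul_sum,
            ← Finset.mul_sum, ← Finset.mul_sum]
      _ = _ := by rw [e1, e2, e3]; ring
  rw [Finset.sum_congr rfl (fun s' _ => key s')]
  have hps := (hp s a).2
  calc ∑ s' : S, μ t s a * p s a s' * (π t s a / μ t s a) ^ 2 *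
        ((r s a) ^ 2 + 2 * r s a * vval p r π n (t + 1) s'
          + (pdisVar p r π μ n (t + 1) s' + (vval p r π n (t + 1) s') ^ 2))
      = ∑ s' : S,
          ((μ t s a * (π t s a / μ t s a) ^ 2 * (r s a) ^ 2) * p s a s'
            + (μ t s a * (π t s a / μ t s a) ^ 2 * (2 * r s a))
              * (p s a s' * vval p r π n (t + 1) s')
            + (μ t s a * (π t s a / μ t s a) ^ 2)
              * (p s a s' * pdisVar p r π μ n (t + 1) s')
            + (μ t s a * (π t s a / μ t s a) ^ 2)
              * (p s a s' * (vval p r π n (t + 1) s') ^ 2)) := by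
        apply Finset.sum_congr rfl; intro s' _; ring
    _ = (μ t s a * (π t s a / μ t s a) ^ 2 * (r s a) ^ 2) * (∑ s' : S, p s a s')
        + (μ t s a * (π t s a / μ t s a) ^ 2 * (2 * r s a))
          * (∑ s' : S, p s a s' * vval p r π n (t + 1) s')
        + (μ t s a * (π t s a / μ t s a) ^ 2)
          * (∑ s' : S, p s a s' * pdisVar p r π μ n (t + 1) s')
        + (μ t s a * (π t s a / μ t s a) ^ 2)
          * (∑ s' : S, p s a s' * (vval p r π n (t + 1) s') ^ 2) := by
        rw [Finset.sum_add_distrib, Finset.sum_add_distrib, Finset.sum_add_distrib,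
          ← Finset.mul_sum, ← Finset.mul_sum, ← Finset.mul_sum, ← Finset.mul_sum]
    _ = _ := by rw [hps]; simp only [nuVar, qval]; ring

lemma pdisVar_main (p : S → A → S → ℝ) (r : S → A → ℝ) (π μ : ℕ → S → A → ℝ)
    (hp : ∀ s a, (∀ s', 0 ≤ p s a s') ∧ (∑ s', p s a s') = 1)
    (hμ : ∀ t s, (∀ a, 0 ≤ μ t s a) ∧ (∑ a, μ t s a) = 1)
    (n t : ℕ)
    (hcov : ∀ k, t ≤ k → k < t + (n + 1) → ∀ (s : S) (a : A), μ k s a = 0 →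
        π k s a * qval p r π (t + (n + 1) - k - 1) k s a = 0) (s : S) :
    pdisVar p r π μ (n + 1) t s
      = (∑ a ∈ Finset.univ.filter (fun a => 0 < μ t s a),
          μ t s a * (π t s a / μ t s a) ^ 2 *
            ((∑ s', p s a s' * pdisVar p r π μ n (t + 1) s')
              + nuVar p r π n t s a + (qval p r π n t s a) ^ 2))
        - (vval p r π (n + 1) t s) ^ 2 := by
  have hcov' : ∀ k, t + 1 ≤ k → k < (t + 1) + n → ∀ (s : S) (a : A), μ k s a = 0 →
      π k s a * qval p r π ((t + 1) + n - k - 1) k s a = 0 := by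
    intro k hk1 hk2 s' a h
    have heq : (t + 1) + n - k - 1 = t + (n + 1) - k - 1 := by omega
    rw [heq]; exact hcov k (by omega) (by omega) s' a h
  have h2 := expTraj_pdis_sq p r π μ hp hμ n t hcov' s
  have h1 := expTraj_pdis_eq_vval p r π μ hp hμ (n + 1) t hcov s
  have hdef : pdisVar p r π μ (n + 1) t s
      = expTraj p μ (n + 1) t s (fun τ => (pdis r π μ (n + 1) t s τ) ^ 2)
        - (expTraj p μ (n + 1) t s (pdis r π μ (n + 1) t s)) ^ 2 := rfl
  rw [hdef, h2, h1]
  congr 1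
  rw [Finset.sum_filter]
  apply Finset.sum_congr rfl
  intro a _
  by_cases h : 0 < μ t s a
  · rw [if_pos h]
  · rw [if_neg h]
    have h0 : μ t s a = 0 := le_antisymm (not_lt.1 h) ((hμ t s).1 a)
    rw [h0]
    ring

end AuxLemmas

/-- **Backward recursion for the conditional variance of the PDIS return.**
For every behavior policy `μ ∈ Λ` and every state `s`: at `t = T−1`,
`Var(G^PDIS(τ^{μ_{t:T−1}}) | S_t = s)
  = ∑_{a : μ_t(a|s)>0} μ_t(a|s) ρ_t(a|s)² q_{π,t}(s,a)² − v_{π,t}(s)²`,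
and for `t ∈ {0,…,T−2}`,
`Var(G^PDIS(τ^{μ_{t:T−1}}) | S_t = s)
  = ∑_{a : μ_t(a|s)>0} μ_t(a|s) ρ_t(a|s)² (∑_{s'} p(s'|s,a) Var(G^PDIS(τ^{μ_{t+1:T−1}}) | S_{t+1}=s')
      + ν_{π,t}(s,a) + q_{π,t}(s,a)²) − v_{π,t}(s)²`,
where `ρ_t(a|s) = π_t(a|s)/μ_t(a|s)`. -/
theorem pdis_variance_recursion
    {S A : Type} [Fintype S] [Fintype A]
    (T : ℕ) (hT : 1 ≤ T)
    (p : S → A → S → ℝ) (r : S → A → ℝ) (π μ : ℕ → S → A → ℝ)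
    (hp : ∀ s a, (∀ s', 0 ≤ p s a s') ∧ (∑ s', p s a s') = 1)
    (hπ : ∀ t s, (∀ a, 0 ≤ π t s a) ∧ (∑ a, π t s a) = 1)
    (hμ : ∀ t s, (∀ a, 0 ≤ μ t s a) ∧ (∑ a, μ t s a) = 1)
    (hΛ : ∀ t, t < T → ∀ s a, μ t s a = 0 → π t s a * qval p r π (T - t - 1) t s a = 0) :
    (∀ s : S,
      pdisVar p r π μ 1 (T - 1) s
        = (∑ a ∈ Finset.univ.filter (fun a => 0 < μ (T - 1) s a),
            μ (T - 1) s a * (π (T - 1) s a / μ (T - 1) s a) ^ 2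
              * (qval p r π 0 (T - 1) s a) ^ 2)
          - (vval p r π 1 (T - 1) s) ^ 2) ∧
    (∀ t, t + 1 < T → ∀ s : S,
      pdisVar p r π μ (T - t) t s
        = (∑ a ∈ Finset.univ.filter (fun a => 0 < μ t s a),
            μ t s a * (π t s a / μ t s a) ^ 2
              * ((∑ s', p s a s' * pdisVar p r π μ (T - t - 1) (t + 1) s')
                  + nuVar p r π (T - t - 1) t s a + (qval p r π (T - t - 1) t s a) ^ 2))
          - (vval p r π (T - t) t s) ^ 2) := by
  constructor
  · intro s
    have hcov : ∀ k, T - 1 ≤ k → k < (T - 1) + (0 + 1) → ∀ (s : S) (a : A),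
        μ k s a = 0 → π k s a * qval p r π ((T - 1) + (0 + 1) - k - 1) k s a = 0 := by
      intro k hk1 hk2 s' a h
      have heq : (T - 1) + (0 + 1) - k - 1 = T - k - 1 := by omega
      rw [heq]; exact hΛ k (by omega) s' a h
    have h := pdisVar_main p r π μ hp hμ 0 (T - 1) hcov s
    simpa [pdisVar_zero, nuVar_zero] using h
  · intro t ht s
    have hcov : ∀ k, t ≤ k → k < t + (T - t - 1 + 1) → ∀ (s : S) (a : A),
        μ k s a = 0 → π k s a * qval p r π (t + (T - t - 1 + 1) - k - 1) k s a = 0 := by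
      intro k hk1 hk2 s' a h
      have heq : t + (T - t - 1 + 1) - k - 1 = T - k - 1 := by omega
      rw [heq]; exact hΛ k (by omega) s' a h
    have h := pdisVar_main p r π μ hp hμ (T - t - 1) t hcov s
    have hn : T - t - 1 + 1 = T - t := by omega
    rw [hn] at h
    exact h
end

section
/- The extended reward admits the recursive expression: for all (s,a), r̃_{T−1}(s,a) = r(s,a)², and for every t ∈ {0,…,T−2}, r̃_t(s,a) = 2·q_{π,t}(s,a)·r(s,a) − r(s,a)² + Σ_{s'} Σ_{a'} p(s'|s,a)·π_{t+1}(a'|s')·(π_{t+1}(a'|s')/μ*_{t+1}(a'|s'))·r̃_{t+1}(s',a'), where the inner sum is over a' with μ*_{t+1}(a'|s') > 0. -/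
open Finset

section AuxLemmas

variable {S A : Type} [Fintype S] [Fintype A]

lemma expTraj_zero (p : S → A → S → ℝ) (μ : ℕ → S → A → ℝ) (t : ℕ) (s : S)
    (f : (Fin 0 → A × S) → ℝ) :
    expTraj p μ 0 t s f = f default := by
  simp [expTraj, trajProb]

lemma expTraj_succ (p : S → A → S → ℝ) (μ : ℕ → S → A → ℝ) (n t : ℕ) (s : S)
    (f : (Fin (n + 1) → A × S) → ℝ) :
    expTraj p μ (n + 1) t s f
      = ∑ a, ∑ s', μ t s a * p s a s' *
          expTraj p μ n (t + 1) s' (fun g => f (Fin.cons (a, s') g)) := by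
  unfold expTraj
  rw [← Fintype.sum_equiv (Fin.consEquiv (fun _ : Fin (n + 1) => A × S))
      (fun x => trajProb p μ (n + 1) t s (Fin.consEquiv _ x) *
        f (Fin.consEquiv _ x)) _ (fun x => rfl)]
  rw [Fintype.sum_prod_type, Fintype.sum_prod_type]
  refine Finset.sum_congr rfl fun a _ => ?_
  refine Finset.sum_congr rfl fun s' _ => ?_
  rw [Finset.mul_sum]
  refine Finset.sum_congr rfl fun g _ => ?_
  have hc : (Fin.consEquiv (fun _ : Fin (n + 1) => A × S)) ((a, s'), g)
      = Fin.cons (a, s') g := rfl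
  rw [hc]
  simp only [trajProb, Fin.cons_zero, Fin.cons_succ]
  ring

lemma expTraj_const_mul (p : S → A → S → ℝ) (μ : ℕ → S → A → ℝ) (n t : ℕ) (s : S)
    (c : ℝ) (f : (Fin n → A × S) → ℝ) :
    expTraj p μ n t s (fun g => c * f g) = c * expTraj p μ n t s f := by
  simp only [expTraj, Finset.mul_sum]
  exact Finset.sum_congr rfl fun g _ => by ring

lemma expTraj_add (p : S → A → S → ℝ) (μ : ℕ → S → A → ℝ) (n t : ℕ) (s : S)
    (f h : (Fin n → A × S) → ℝ) :
    expTraj p μ n t s (fun g => f g + h g)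
      = expTraj p μ n t s f + expTraj p μ n t s h := by
  simp only [expTraj, mul_add, Finset.sum_add_distrib]

lemma expTraj_one (p : S → A → S → ℝ) (μ : ℕ → S → A → ℝ)
    (hp : ∀ s a, (∑ s', p s a s') = 1) :
    ∀ n t, (∀ k, k < n → ∀ s', (∑ a, μ (t + k) s' a) = 1) → ∀ s : S,
      expTraj p μ n t s (fun _ => (1 : ℝ)) = 1 := by
  intro n
  induction n with
  | zero => intro t _ s; simp [expTraj_zero]
  | succ n ih =>
    intro t hμ s
    rw [expTraj_succ]
    have h1 : ∀ (a : A) (s' : S),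
        expTraj p μ n (t + 1) s' (fun _ => (1 : ℝ)) = 1 := by
      intro a s'
      refine ih (t + 1) (fun k hk s'' => ?_) s'
      have := hμ (k + 1) (by omega) s''
      have e : t + (k + 1) = t + 1 + k := by omega
      rwa [e] at this
    have : ∀ a : A, ∑ s', μ t s a * p s a s' *
        expTraj p μ n (t + 1) s' (fun g => (1 : ℝ)) = μ t s a := by
      intro a
      have : ∀ s', μ t s a * p s a s' *
          expTraj p μ n (t + 1) s' (fun g => (1 : ℝ)) = μ t s a * p s a s' := by
        intro s'; rw [h1 a s', mul_one]
      rw [Finset.sum_congr rfl fun s' _ => this s', ← Finset.mul_sum, hp s a, mul_one]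
    rw [Finset.sum_congr rfl fun a _ => this a]
    have := hμ 0 (by omega) s
    simpa using this

/-- Coverage-type hypothesis bundle for `μ` on the time window `[t, t+n)`. -/
def covHyp (p : S → A → S → ℝ) (r : S → A → ℝ) (π μ : ℕ → S → A → ℝ)
    (n t : ℕ) : Prop :=
  ∀ k, k < n → ∀ s' : S, (∀ a, 0 ≤ μ (t + k) s' a) ∧ (∑ a, μ (t + k) s' a) = 1 ∧
    (∀ a : A, μ (t + k) s' a = 0 →
      π (t + k) s' a * qval p r π (n - k - 1) (t + k) s' a = 0)

lemma covHyp_tail {p : S → A → S → ℝ} {r : S → A → ℝ} {π μ : ℕ → S → A → ℝ}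
    {n t : ℕ} (h : covHyp p r π μ (n + 1) t) : covHyp p r π μ n (t + 1) := by
  intro k hk s'
  have := h (k + 1) (by omega) s'
  have e : t + (k + 1) = t + 1 + k := by omega
  have e2 : n + 1 - (k + 1) - 1 = n - k - 1 := by omega
  rw [e, e2] at this
  exact this

lemma expTraj_pdis (p : S → A → S → ℝ) (r : S → A → ℝ) (π μ : ℕ → S → A → ℝ)
    (hp : ∀ s a, (∑ s', p s a s') = 1) :
    ∀ n t, covHyp p r π μ n t → ∀ s : S,
      expTraj p μ n t s (pdis r π μ n t s) = vval p r π n t s := by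
  intro n
  induction n with
  | zero => intro t _ s; simp [expTraj_zero, pdis, vval]
  | succ n ih =>
    intro t hμ s
    have htail := covHyp_tail hμ
    have hsum1 : ∀ k, k < n → ∀ s' : S, (∑ a, μ (t + 1 + k) s' a) = 1 :=
      fun k hk s' => (htail k hk s').2.1
    rw [expTraj_succ]
    have hterm : ∀ (a : A) (s' : S),
        expTraj p μ n (t + 1) s'
          (fun g => pdis r π μ (n + 1) t s (Fin.cons (a, s') g))
        = π t s a / μ t s a * (r s a + vval p r π n (t + 1) s') := by
      intro a s'
      have : (fun g => pdis r π μ (n + 1) t s (Fin.cons (a, s') g))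
          = fun g => π t s a / μ t s a *
              (r s a + pdis r π μ n (t + 1) s' g) := by
        funext g
        simp only [pdis, Fin.cons_zero, Fin.cons_succ]
      rw [this]
      have : (fun g => π t s a / μ t s a * (r s a + pdis r π μ n (t + 1) s' g))
          = fun g => π t s a / μ t s a *
              (r s a * (fun _ => (1:ℝ)) g + pdis r π μ n (t + 1) s' g) := by
        funext g; ring
      rw [this, expTraj_const_mul]
      rw [expTraj_add, expTraj_const_mul, expTraj_one p μ hp n (t + 1) hsum1 s',
        ih (t + 1) htail s', mul_one]
    have hA : ∀ a : A, ∑ s', μ t s a * p s a s' *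
        expTraj p μ n (t + 1) s'
          (fun g => pdis r π μ (n + 1) t s (Fin.cons (a, s') g))
        = π t s a * qval p r π n t s a := by
      intro a
      rw [Finset.sum_congr rfl fun s' _ => by rw [hterm a s']]
      by_cases hμa : μ t s a = 0
      · have h0 := ((hμ 0 (by omega) s).2.2 a)
        have e : t + 0 = t := by omega
        rw [e] at h0
        have e2 : n + 1 - 0 - 1 = n := by omega
        rw [e2] at h0
        simp [hμa, h0 hμa]
      · have hq : qval p r π n t s a
            = r s a + ∑ s', p s a s' * vval p r π n (t + 1) s' := rfl
        rw [hq]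
        rw [show (∑ s', μ t s a * p s a s' *
            (π t s a / μ t s a * (r s a + vval p r π n (t + 1) s')))
            = π t s a * (∑ s', p s a s' * (r s a + vval p r π n (t + 1) s')) by
          rw [Finset.mul_sum]
          refine Finset.sum_congr rfl fun s' _ => ?_
          field_simp]
        congr 1
        rw [show (∑ s', p s a s' * (r s a + vval p r π n (t + 1) s'))
            = (∑ s', p s a s') * r s a
              + ∑ s', p s a s' * vval p r π n (t + 1) s' by
          rw [Finset.sum_mul, ← Finset.sum_add_distrib]
          exact Finset.sum_congr rfl fun s' _ => by ring]
        rw [hp s a, one_mul]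
    rw [Finset.sum_congr rfl fun a _ => hA a]
    simp only [vval, qval]

/-- Second moment of the PDIS estimator. -/
noncomputable def pdisM (p : S → A → S → ℝ) (r : S → A → ℝ) (π μ : ℕ → S → A → ℝ)
    (n t : ℕ) (s : S) : ℝ :=
  expTraj p μ n t s (fun τ => (pdis r π μ n t s τ) ^ 2)

lemma pdisM_zero (p : S → A → S → ℝ) (r : S → A → ℝ) (π μ : ℕ → S → A → ℝ)
    (t : ℕ) (s : S) : pdisM p r π μ 0 t s = 0 := by
  simp [pdisM, expTraj_zero, pdis]

lemma pdisM_succ (p : S → A → S → ℝ) (r : S → A → ℝ) (π μ : ℕ → S → A → ℝ)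
    (hp : ∀ s a, (∑ s', p s a s') = 1)
    (n t : ℕ) (s : S) (hμ : covHyp p r π μ (n + 1) t) :
    pdisM p r π μ (n + 1) t s
      = ∑ a ∈ Finset.univ.filter (fun a => 0 < μ t s a),
          (π t s a) ^ 2 / μ t s a *
            ((r s a) ^ 2
              + 2 * r s a * (∑ s', p s a s' * vval p r π n (t + 1) s')
              + ∑ s', p s a s' * pdisM p r π μ n (t + 1) s') := by
  have htail := covHyp_tail hμ
  have hsum1 : ∀ k, k < n → ∀ s' : S, (∑ a, μ (t + 1 + k) s' a) = 1 :=
    fun k hk s' => (htail k hk s').2.1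
  rw [pdisM, expTraj_succ]
  have hterm : ∀ (a : A) (s' : S),
      expTraj p μ n (t + 1) s'
        (fun g => (pdis r π μ (n + 1) t s (Fin.cons (a, s') g)) ^ 2)
      = (π t s a / μ t s a) ^ 2 *
          ((r s a) ^ 2 + 2 * r s a * vval p r π n (t + 1) s'
            + pdisM p r π μ n (t + 1) s') := by
    intro a s'
    have : (fun g => (pdis r π μ (n + 1) t s (Fin.cons (a, s') g)) ^ 2)
        = fun g => (π t s a / μ t s a) ^ 2 *
            ((r s a) ^ 2 * (fun _ => (1:ℝ)) g
              + (2 * r s a * pdis r π μ n (t + 1) s' g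
                + (pdis r π μ n (t + 1) s' g) ^ 2)) := by
      funext g
      simp only [pdis, Fin.cons_zero, Fin.cons_succ]
      ring
    rw [this, expTraj_const_mul, expTraj_add, expTraj_const_mul,
      expTraj_one p μ hp n (t + 1) hsum1 s', expTraj_add, expTraj_const_mul,
      expTraj_pdis p r π μ hp n (t + 1) htail s', mul_one]
    rw [pdisM]
    ring
  rw [Finset.sum_congr rfl fun a _ => Finset.sum_congr rfl fun s' _ => by
    rw [hterm a s']]
  have hA : ∀ a : A, ∑ s', μ t s a * p s a s' *
      ((π t s a / μ t s a) ^ 2 *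
        ((r s a) ^ 2 + 2 * r s a * vval p r π n (t + 1) s'
          + pdisM p r π μ n (t + 1) s'))
      = μ t s a * (π t s a / μ t s a) ^ 2 *
          ((r s a) ^ 2
            + 2 * r s a * (∑ s', p s a s' * vval p r π n (t + 1) s')
            + ∑ s', p s a s' * pdisM p r π μ n (t + 1) s') := by
    intro a
    have expand : ∀ s' : S, μ t s a * p s a s' *
        ((π t s a / μ t s a) ^ 2 *
          ((r s a) ^ 2 + 2 * r s a * vval p r π n (t + 1) s'
            + pdisM p r π μ n (t + 1) s'))
        = μ t s a * (π t s a / μ t s a) ^ 2 * (r s a) ^ 2 * p s a s'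
          + (2 * r s a * (μ t s a * (π t s a / μ t s a) ^ 2)
              * (p s a s' * vval p r π n (t + 1) s')
            + μ t s a * (π t s a / μ t s a) ^ 2
              * (p s a s' * pdisM p r π μ n (t + 1) s')) :=
      fun s' => by ring
    rw [Finset.sum_congr rfl fun s' _ => expand s', Finset.sum_add_distrib,
      Finset.sum_add_distrib, ← Finset.mul_sum, ← Finset.mul_sum, ← Finset.mul_sum,
      hp s a]
    ring
  rw [Finset.sum_congr rfl fun a _ => hA a]
  rw [← Finset.sum_filter_of_ne (f := fun a => μ t s a * (π t s a / μ t s a) ^ 2 *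
      ((r s a) ^ 2
        + 2 * r s a * (∑ s', p s a s' * vval p r π n (t + 1) s')
        + ∑ s', p s a s' * pdisM p r π μ n (t + 1) s'))
      (p := fun a => 0 < μ t s a) ?_]
  · refine Finset.sum_congr rfl fun a ha => ?_
    have hpos : 0 < μ t s a := (Finset.mem_filter.mp ha).2
    have hne : μ t s a ≠ 0 := ne_of_gt hpos
    field_simp
  · intro a _ hne
    by_contra hnot
    have h0 : μ t s a = 0 := by
      have hnn := (hμ 0 (by omega) s).1 a
      have e : t + 0 = t := by omega
      rw [e] at hnn
      cases lt_or_eq_of_le hnn with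
      | inl h => exact absurd h hnot
      | inr h => exact h.symm
    exact hne (by simp [h0])

/-- The key unfolding of `rtilde` in terms of the second moment `pdisM`. -/
lemma rtilde_eq_M (p : S → A → S → ℝ) (r : S → A → ℝ) (π μ : ℕ → S → A → ℝ)
    (hp : ∀ s a, (∑ s', p s a s') = 1)
    (T t : ℕ) (ht : t + 1 < T) (hμ : covHyp p r π μ (T - t - 1) (t + 1))
    (s : S) (a : A) :
    rtilde p r π μ T t s a
      = 2 * qval p r π (T - t - 1) t s a * r s a - (r s a) ^ 2
        + ∑ s', p s a s' * pdisM p r π μ (T - t - 1) (t + 1) s' := by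
  have hne : t + 1 ≠ T := by omega
  rw [rtilde, if_neg hne]
  have hvar : ∀ s' : S, pdisVar p r π μ (T - t - 1) (t + 1) s'
      = pdisM p r π μ (T - t - 1) (t + 1) s'
        - (vval p r π (T - t - 1) (t + 1) s') ^ 2 := by
    intro s'
    rw [pdisVar, ← pdisM, expTraj_pdis p r π μ hp _ (t + 1) hμ s']
  rw [Finset.sum_congr rfl fun s' _ => by rw [hvar s']]
  rw [show (∑ s', p s a s' *
      (pdisM p r π μ (T - t - 1) (t + 1) s'
        - (vval p r π (T - t - 1) (t + 1) s') ^ 2))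
      = (∑ s', p s a s' * pdisM p r π μ (T - t - 1) (t + 1) s')
        - ∑ s', p s a s' * (vval p r π (T - t - 1) (t + 1) s') ^ 2 by
    rw [← Finset.sum_sub_distrib]
    exact Finset.sum_congr rfl fun s' _ => by ring]
  rw [nuVar, qval]
  ring

end AuxLemmas

/-- **Recursive expression for the extended reward.**
In the constrained MDP, fix a safety parameter `ε ≥ 0` and let `μ*` be the behavior
policy defined backward in time as the step-wise optimal solution of the constrained
problem at each `t` and `s`. Then the extended reward (computed with continuation
policy `μ*`) satisfies: `r̃_{T−1}(s,a) = r(s,a)²` for all `(s,a)`, and for every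
`t ∈ {0,…,T−2}`,
`r̃_t(s,a) = 2 q_{π,t}(s,a) r(s,a) − r(s,a)²
  + ∑_{s'} ∑_{a' : μ*_{t+1}(a'|s')>0} p(s'|s,a) π_{t+1}(a'|s')
      (π_{t+1}(a'|s')/μ*_{t+1}(a'|s')) r̃_{t+1}(s',a')`. -/
theorem rtilde_recursion
    {S A : Type} [Fintype S] [Fintype A]
    (T : ℕ) (hT : 1 ≤ T)
    (p : S → A → S → ℝ) (r c : S → A → ℝ) (π μstar : ℕ → S → A → ℝ)
    (hp : ∀ s a, (∀ s', 0 ≤ p s a s') ∧ (∑ s', p s a s') = 1)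
    (hπ : ∀ t s, (∀ a, 0 ≤ π t s a) ∧ (∑ a, π t s a) = 1)
    (hc : ∀ s a, 0 ≤ c s a)
    (ε : ℝ) (hε : 0 ≤ ε)
    (hopt : ∀ t, t < T → ∀ s,
      μstar t s ∈ stepFeasible p r c π μstar T ε t s ∧
      ∀ ν ∈ stepFeasible p r c π μstar T ε t s,
        stepObj p r π μstar T t s (μstar t s) ≤ stepObj p r π μstar T t s ν) :
    (∀ (s : S) (a : A), rtilde p r π μstar T (T - 1) s a = (r s a) ^ 2) ∧
    (∀ t, t + 1 < T → ∀ (s : S) (a : A),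
      rtilde p r π μstar T t s a
        = 2 * qval p r π (T - t - 1) t s a * r s a - (r s a) ^ 2
          + ∑ s', ∑ a' ∈ Finset.univ.filter (fun a' => 0 < μstar (t + 1) s' a'),
              p s a s' * π (t + 1) s' a' * (π (t + 1) s' a' / μstar (t + 1) s' a')
                * rtilde p r π μstar T (t + 1) s' a') := by
  have hp1 : ∀ s a, (∑ s', p s a s') = 1 := fun s a => (hp s a).2
  have hcov : ∀ u, covHyp p r π μstar (T - u) u := by
    intro u k hk s'
    have ht' : u + k < T := by omega
    obtain ⟨hfeas, -⟩ := hopt (u + k) ht' s'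
    obtain ⟨hnn, hsum, hcv, -⟩ := hfeas
    refine ⟨hnn, hsum, fun a ha => ?_⟩
    have e : T - u - k - 1 = T - (u + k) - 1 := by omega
    rw [e]
    exact hcv a ha
  constructor
  · intro s a
    rw [rtilde, if_pos (by omega : T - 1 + 1 = T)]
  · intro t ht s a
    have covA : covHyp p r π μstar (T - t - 1) (t + 1) := by
      have := hcov (t + 1)
      rwa [show T - (t + 1) = T - t - 1 from by omega] at this
    rw [rtilde_eq_M p r π μstar hp1 T t ht covA s a]
    congr 1
    refine Finset.sum_congr rfl fun s' _ => ?_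
    obtain ⟨m, hnm⟩ : ∃ m, T - t - 1 = m + 1 := ⟨T - t - 2, by omega⟩
    have covA' : covHyp p r π μstar (m + 1) (t + 1) := by rwa [hnm] at covA
    rw [hnm, pdisM_succ p r π μstar hp1 m (t + 1) s' covA', Finset.mul_sum]
    refine Finset.sum_congr rfl fun a' ha' => ?_
    have hI : (r s' a') ^ 2
          + 2 * r s' a' * (∑ s'', p s' a' s'' * vval p r π m (t + 1 + 1) s'')
          + (∑ s'', p s' a' s'' * pdisM p r π μstar m (t + 1 + 1) s'')
        = rtilde p r π μstar T (t + 1) s' a' := by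
      by_cases hm0 : m = 0
      · subst hm0
        rw [rtilde, if_pos (by omega : t + 1 + 1 = T)]
        simp [vval, pdisM_zero]
      · have ht2 : t + 1 + 1 < T := by omega
        have covB : covHyp p r π μstar (T - (t + 1) - 1) (t + 1 + 1) := by
          have := hcov (t + 1 + 1)
          rwa [show T - (t + 1 + 1) = T - (t + 1) - 1 from by omega] at this
        rw [rtilde_eq_M p r π μstar hp1 T (t + 1) ht2 covB s' a']
        rw [show T - (t + 1) - 1 = m from by omega, qval]
        ring
    rw [hI]
    ring
end
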